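/- In a tree G, a nonempty subset X of the vertices is a core (i.e., G[X] is connected, and each x ∈ X has a neighbor x' ∉ X whose only neighbor in X is x, with {x' : x ∈ X} independent) if and only if G[X] is connected and every x ∈ X has at least one neighbor outside X. -/

import Mathlib

open scoped Classical

/-- A core of a graph `G` (general definition). -/
def IsCore {V : Type*} (G : SimpleGraph V) (X : Finset V) : Prop :=
  (G.induce (X : Set V)).Connected ∧
    ∃ g : V → V,
      (∀ x ∈ X, g x ∉ X ∧ G.Adj x (g x) ∧ ∀ y ∈ X, G.Adj y (g x) → y = x) ∧
      (∀ x ∈ X, ∀ y ∈ X, ¬ G.Adj (g x) (g y))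

lemma exists_path_support_subset {V : Type*} (G : SimpleGraph V) (X : Finset V)
    (hconn : (G.induce (X : Set V)).Connected) {x y : V} (hx : x ∈ X) (hy : y ∈ X) :
    ∃ p : G.Walk x y, p.IsPath ∧ ∀ v ∈ p.support, v ∈ X := by
  obtain ⟨w⟩ := hconn ⟨x, hx⟩ ⟨y, hy⟩
  let w' : G.Walk x y := w.map (SimpleGraph.Embedding.induce (X : Set V)).toHom
  refine ⟨w'.toPath, w'.toPath.2, fun v hv => ?_⟩
  have hsub := SimpleGraph.Walk.support_toPath_subset w' hv
  replace hsub : v ∈ w.support.map (SimpleGraph.Embedding.induce (G := G) (X : Set V)).toHom := by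
    rw [← SimpleGraph.Walk.support_map]; exact hsub
  obtain ⟨⟨u, hu⟩, -, rfl⟩ := List.mem_map.mp hsub
  exact hu

/-- in a tree, a nonempty vertex set is a core iff it induces a
connected subgraph and each of its vertices has a neighbor outside the set. -/
theorem isCore_iff_of_tree {V : Type*} (G : SimpleGraph V) (hG : G.IsTree)
    (X : Finset V) (hne : X.Nonempty) :
    IsCore G X ↔
      (G.induce (X : Set V)).Connected ∧ ∀ x ∈ X, ∃ y, y ∉ X ∧ G.Adj x y := by
  constructor
  · rintro ⟨hconn, g, h1, -⟩
    exact ⟨hconn, fun x hx => ⟨g x, (h1 x hx).1, (h1 x hx).2.1⟩⟩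
  · rintro ⟨hconn, hout⟩
    refine ⟨hconn, fun x => if h : x ∈ X then (hout x h).choose else x, ?_, ?_⟩
    · intro x hx
      obtain ⟨hgx, hadj⟩ := (hout x hx).choose_spec
      simp only [dif_pos hx]
      refine ⟨hgx, hadj, ?_⟩
      intro y hy hyadj
      by_contra hne'
      -- path from x to y inside X
      obtain ⟨p, hp, hsupp⟩ := exists_path_support_subset G X hconn hx hy
      -- explicit path x - gx - y
      set gx := (hout x hx).choose with hgxdef
      have hq : (SimpleGraph.Walk.cons hadj
          (SimpleGraph.Walk.cons hyadj.symm SimpleGraph.Walk.nil)).IsPath := by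
        simp only [SimpleGraph.Walk.cons_isPath_iff, SimpleGraph.Walk.isPath_iff_eq_nil,
          SimpleGraph.Walk.support_cons, SimpleGraph.Walk.support_nil]
        refine ⟨⟨trivial, ?_⟩, ?_⟩
        · simp only [List.mem_cons, List.not_mem_nil, or_false]
          exact fun h => hgx (h ▸ hy)
        · simp only [List.mem_cons, List.not_mem_nil, or_false]
          rintro (h | h)
          · exact hgx (h ▸ hx)
          · exact hne' h.symm
      have := hG.IsAcyclic.path_unique ⟨p, hp⟩ ⟨_, hq⟩
      have hgmem : gx ∈ p.support := by
        have : gx ∈ (⟨p, hp⟩ : G.Path x y).1.support := by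
          rw [this]; simp
        exact this
      exact hgx (hsupp gx hgmem)
    · intro x hx y hy
      simp only [dif_pos hx, dif_pos hy]
      obtain ⟨hgx, hadjx⟩ := (hout x hx).choose_spec
      obtain ⟨hgy, hadjy⟩ := (hout y hy).choose_spec
      set gx := (hout x hx).choose
      set gy := (hout y hy).choose
      intro hadj
      have hxy : x ≠ y := by
        rintro rfl
        exact hadj.ne rfl
      obtain ⟨p, hp, hsupp⟩ := exists_path_support_subset G X hconn hx hy
      have hq : (SimpleGraph.Walk.cons hadjx (SimpleGraph.Walk.cons hadj
          (SimpleGraph.Walk.cons hadjy.symm SimpleGraph.Walk.nil))).IsPath := by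
        simp only [SimpleGraph.Walk.cons_isPath_iff, SimpleGraph.Walk.isPath_iff_eq_nil,
          SimpleGraph.Walk.support_cons, SimpleGraph.Walk.support_nil, List.mem_cons,
          List.not_mem_nil, or_false]
        refine ⟨⟨⟨trivial, fun h => hgy (h ▸ hy)⟩, ?_⟩, ?_⟩
        · rintro (h | h)
          · exact hadj.ne h
          · exact hgx (h ▸ hy)
        · rintro (h | h | h)
          · exact hgx (h ▸ hx)
          · exact hgy (h ▸ hx)
          · exact hxy h
      have := hG.IsAcyclic.path_unique ⟨p, hp⟩ ⟨_, hq⟩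
      have hgmem : gx ∈ p.support := by
        have : gx ∈ (⟨p, hp⟩ : G.Path x y).1.support := by
          rw [this]; simp
        exact this
      exact hgx (hsupp gx hgmem)
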